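/- arXiv:2112.10095 — 4 statements merged into one kernel-verified Lean document; each statement's English description precedes it below -/
import Mathlib

section
/- Let 0 = x₀ ≤ x₁ ≤ ⋯ ≤ x_n, let z₁ ≥ z₂ ≥ ⋯ ≥ z_n ≥ 0, and let y ≥ 0. Then the volume of the union ⋃_{j=1}^{n} [0,x_j]×[0,y]×[0,z_j] equals y · Σ_{j=1}^{n} (x_j − x_{j−1})·z_j. -/
open MeasureTheory Set

theorem staircase_union_volume (n : ℕ) (hn : 1 ≤ n) (x z : ℕ → ℝ) (y : ℝ)
    (hx0 : x 0 = 0) (hxmono : ∀ j, j < n → x j ≤ x (j+1))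
    (hzanti : ∀ j, 1 ≤ j → j < n → z (j+1) ≤ z j)
    (hzn : 0 ≤ z n) (hy : 0 ≤ y) :
    volume (⋃ j ∈ Finset.Icc 1 n,
        Icc (0:ℝ) (x j) ×ˢ Icc (0:ℝ) y ×ˢ Icc (0:ℝ) (z j)) =
      ENNReal.ofReal (y * ∑ j ∈ Finset.Icc 1 n, (x j - x (j-1)) * z j) := by
  -- chained monotonicity of x
  have hxm : ∀ i j, i ≤ j → j ≤ n → x i ≤ x j := by
    intro i j hij hjn
    induction j with
    | zero => simp_all
    | succ m ih =>
      rcases Nat.lt_or_ge i (m+1) with h | h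
      · exact le_trans (ih (by omega) (by omega)) (hxmono m (by omega))
      · have : i = m+1 := by omega
        subst this; exact le_rfl
  -- chained antitonicity of z
  have hzm : ∀ i j, 1 ≤ i → i ≤ j → j ≤ n → z j ≤ z i := by
    intro i j hi hij hjn
    induction j with
    | zero => omega
    | succ m ih =>
      rcases Nat.lt_or_ge i (m+1) with h | h
      · exact le_trans (hzanti m (by omega) (by omega)) (ih (by omega) (by omega))
      · have : i = m+1 := by omega
        subst this; exact le_rfl
  have hznn : ∀ j, 1 ≤ j → j ≤ n → 0 ≤ z j := fun j h1 h2 =>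
    le_trans hzn (hzm j n h1 h2 le_rfl)
  have hxnn : ∀ j, j ≤ n → 0 ≤ x j := fun j h => hx0 ▸ hxm 0 j (Nat.zero_le _) h
  -- rewrite union as union of slabs
  have hset : (⋃ j ∈ Finset.Icc 1 n,
        Icc (0:ℝ) (x j) ×ˢ Icc (0:ℝ) y ×ˢ Icc (0:ℝ) (z j))
      = ⋃ j ∈ Finset.Icc 1 n,
        Icc (x (j-1)) (x j) ×ˢ Icc (0:ℝ) y ×ˢ Icc (0:ℝ) (z j) := by
    ext p
    simp only [mem_iUnion, Finset.mem_Icc, Set.mem_prod, Set.mem_Icc, exists_prop]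
    constructor
    · rintro ⟨j, ⟨hj1, hjn⟩, ⟨ha0, haj⟩, hb, hc⟩
      have hex : ∃ k, 1 ≤ k ∧ p.1 ≤ x k := ⟨j, hj1, haj⟩
      obtain ⟨hk1, hkx⟩ := Nat.find_spec hex
      set k := Nat.find hex with hk
      have hkj : k ≤ j := Nat.find_min' hex ⟨hj1, haj⟩
      have hlow : x (k-1) ≤ p.1 := by
        rcases Nat.eq_or_lt_of_le hk1 with h | h
        · have hk1' : k = 1 := h.symm
          rw [hk1']
          show x 0 ≤ p.1
          rw [hx0]; exact ha0
        · have hmin := Nat.find_min hex (m := k-1) (by omega)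
          push_neg at hmin
          exact le_of_lt (hmin (by omega))
      exact ⟨k, ⟨hk1, le_trans hkj hjn⟩, ⟨hlow, hkx⟩, hb,
        ⟨hc.1, le_trans hc.2 (hzm k j hk1 hkj hjn)⟩⟩
    · rintro ⟨j, ⟨hj1, hjn⟩, ⟨ha1, ha2⟩, hb, hc⟩
      exact ⟨j, ⟨hj1, hjn⟩, ⟨le_trans (hxnn (j-1) (by omega)) ha1, ha2⟩, hb, hc⟩
  rw [hset]
  have hmeas : ∀ j ∈ Finset.Icc 1 n, NullMeasurableSet
      (Icc (x (j-1)) (x j) ×ˢ Icc (0:ℝ) y ×ˢ Icc (0:ℝ) (z j)) volume :=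
    fun j _ => (measurableSet_Icc.prod (measurableSet_Icc.prod measurableSet_Icc)).nullMeasurableSet
  have hdisj : Set.Pairwise ↑(Finset.Icc 1 n)
      (Function.onFun (AEDisjoint volume) fun j =>
        Icc (x (j-1)) (x j) ×ˢ Icc (0:ℝ) y ×ˢ Icc (0:ℝ) (z j)) := by
    have key : ∀ i j, i ∈ Finset.Icc 1 n → j ∈ Finset.Icc 1 n → i < j →
        AEDisjoint volume (Icc (x (i-1)) (x i) ×ˢ Icc (0:ℝ) y ×ˢ Icc (0:ℝ) (z i))
          (Icc (x (j-1)) (x j) ×ˢ Icc (0:ℝ) y ×ˢ Icc (0:ℝ) (z j)) := by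
      intro i j hi hj hij
      simp only [Finset.mem_Icc] at hi hj
      have hsub : (Icc (x (i-1)) (x i) ×ˢ Icc (0:ℝ) y ×ˢ Icc (0:ℝ) (z i)) ∩
          (Icc (x (j-1)) (x j) ×ˢ Icc (0:ℝ) y ×ˢ Icc (0:ℝ) (z j)) ⊆
          Icc (x (j-1)) (x i) ×ˢ (univ : Set (ℝ × ℝ)) := by
        rintro p ⟨⟨⟨_, h1⟩, _⟩, ⟨⟨h2, _⟩, _⟩⟩
        exact ⟨⟨h2, h1⟩, trivial⟩
      refine measure_mono_null hsub ?_
      rw [Measure.volume_eq_prod, Measure.prod_prod, Real.volume_Icc]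
      have : x i ≤ x (j-1) := hxm i (j-1) (by omega) (by omega)
      rw [ENNReal.ofReal_eq_zero.mpr (by linarith), zero_mul]
    intro i hi j hj hne
    rcases Nat.lt_or_ge i j with h | h
    · exact key i j hi hj h
    · exact (key j i hj hi (by omega)).symm
  rw [measure_biUnion_finset₀ hdisj hmeas, Finset.mul_sum]
  rw [ENNReal.ofReal_sum_of_nonneg (fun i hi => by
    simp only [Finset.mem_Icc] at hi
    have h1 : x (i-1) ≤ x i := hxm (i-1) i (by omega) hi.2
    have h2 : 0 ≤ z i := hznn i hi.1 hi.2
    have : 0 ≤ (x i - x (i-1)) * z i := mul_nonneg (by linarith) h2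
    exact mul_nonneg hy this)]
  refine Finset.sum_congr rfl fun i hi => ?_
  simp only [Finset.mem_Icc] at hi
  have h1 : x (i-1) ≤ x i := hxm (i-1) i (by omega) hi.2
  have h2 : 0 ≤ z i := hznn i hi.1 hi.2
  rw [Measure.volume_eq_prod, Measure.prod_prod, Measure.volume_eq_prod, Measure.prod_prod,
    Real.volume_Icc, Real.volume_Icc, Real.volume_Icc,
    ← ENNReal.ofReal_mul (by linarith : (0:ℝ) ≤ y - 0),
    ← ENNReal.ofReal_mul (by linarith : (0:ℝ) ≤ x i - x (i-1))]
  congr 1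
  ring
end

section
/- Fix integers k ≥ 1, m ≥ 1, a set A ⊆ {1,…,k}×{1,…,m}, and a subset J ⊆ {1,…,m}. Let P = { p_{i,j} = (j, i, −(k+2)j − i) : (i,j) ∈ A } and B_J = { b_j = (j, k+1, −(k+2)j + 1) : j ∉ J }. Then the set of maximal points of S = P ∪ B_J is exactly B_J ∪ { p_{i,j} : (i,j) ∈ A, j ∈ J }. -/
/-- `Dominates p q` means that `q` dominates `p` coordinatewise in `ℤ³`. -/
def Dominates (p q : ℤ × ℤ × ℤ) : Prop :=
  p.1 ≤ q.1 ∧ p.2.1 ≤ q.2.1 ∧ p.2.2 ≤ q.2.2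

private lemma key_eq (t a b c : ℤ) (ht : 0 < t) (hab : a ≤ b)
    (h : t * b ≤ t * a + c) (hc : c < t) : a = b := by
  by_contra h'
  have hb : a + 1 ≤ b := by omega
  have := mul_le_mul_of_nonneg_left hb ht.le
  nlinarith

theorem maximal_points_after_deletion (k m : ℤ) (hk : 1 ≤ k) (hm : 1 ≤ m)
    (A : Set (ℤ × ℤ)) (hA : ∀ p ∈ A, 1 ≤ p.1 ∧ p.1 ≤ k ∧ 1 ≤ p.2 ∧ p.2 ≤ m)
    (J : Set ℤ) (hJ : ∀ j ∈ J, 1 ≤ j ∧ j ≤ m) :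
    let P : Set (ℤ × ℤ × ℤ) :=
      {q | ∃ p ∈ A, q = (p.2, p.1, -(k+2)*p.2 - p.1)}
    let BJ : Set (ℤ × ℤ × ℤ) :=
      {q | ∃ j : ℤ, 1 ≤ j ∧ j ≤ m ∧ j ∉ J ∧ q = (j, k+1, -(k+2)*j + 1)}
    {p ∈ P ∪ BJ | ∀ q ∈ P ∪ BJ, q ≠ p → ¬ Dominates p q} =
      BJ ∪ {q | ∃ p ∈ A, p.2 ∈ J ∧ q = (p.2, p.1, -(k+2)*p.2 - p.1)} := by
  intro P BJ
  ext q
  simp only [Set.mem_setOf_eq, Set.mem_union, Set.mem_sep_iff]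
  constructor
  · rintro ⟨hq, hmax⟩
    rcases hq with ⟨⟨i, j⟩, hij, rfl⟩ | hB
    · by_cases hjJ : j ∈ J
      · exact Or.inr ⟨(i, j), hij, hjJ, rfl⟩
      · exfalso
        obtain ⟨h1, h2, h3, h4⟩ := hA _ hij
        refine hmax (j, k+1, -(k+2)*j + 1) (Or.inr ⟨j, h3, h4, hjJ, rfl⟩) ?_ ?_
        · intro h
          have := congrArg (fun x => x.2.1) h
          simp at this
          omega
        · refine ⟨le_refl _, by dsimp; omega, by dsimp; omega⟩
    · exact Or.inl hB
  · rintro (hB | ⟨⟨i, j⟩, hij, hjJ, rfl⟩)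
    · refine ⟨Or.inr hB, ?_⟩
      obtain ⟨j, hj1, hj2, hjJ, rfl⟩ := hB
      rintro q' (⟨⟨i', j'⟩, hij', rfl⟩ | ⟨j', hj1', hj2', hJ', rfl⟩) hne hdom
      · obtain ⟨a1, a2, a3, a4⟩ := hA _ hij'
        obtain ⟨d1, d2, d3⟩ := hdom
        dsimp at d1 d2 d3
        omega
      · obtain ⟨d1, d2, d3⟩ := hdom
        dsimp at d1 d2 d3
        have hj : j' = j := (key_eq (k+2) j j' 0 (by linarith) d1 (by linarith) (by linarith)).symm
        exact hne (by rw [hj])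
    · have ⟨h1, h2, h3, h4⟩ := hA _ hij
      refine ⟨Or.inl ⟨(i, j), hij, rfl⟩, ?_⟩
      rintro q' (⟨⟨i', j'⟩, hij', rfl⟩ | ⟨j', hj1', hj2', hJ', rfl⟩) hne hdom
      · obtain ⟨a1, a2, a3, a4⟩ := hA _ hij'
        obtain ⟨d1, d2, d3⟩ := hdom
        dsimp at d1 d2 d3
        have hj : j = j' := key_eq (k+2) j j' (i - i') (by linarith) d1 (by linarith) (by linarith)
        have hi : i' = i := by rw [hj] at d3; omega
        exact hne (by rw [← hj, hi])
      · obtain ⟨d1, d2, d3⟩ := hdom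
        dsimp at d1 d2 d3
        have : j' = j := (key_eq (k+2) j j' (i + 1) (by linarith) d1 (by linarith) (by linarith)).symm
        exact hJ' (this ▸ hjJ)
end

section
/- Let N ≥ 1 be an integer, A ⊆ {1,…,N}×{1,…,N}, and I, J ⊆ {1,…,N}. Let C = [1, N+1]×[1, N+1]. Define the family of rectangles consisting of: the unit squares [j, j+1]×[i, i+1] for each (i,j) ∉ A with 1 ≤ i,j ≤ N; the horizontal strips [1, N+1]×[i, i+1] for each i ∉ I; and the vertical strips [j, j+1]×[1, N+1] for each j ∉ J. Then the union of this family of rectangles equals C if and only if there do not exist i ∈ I and j ∈ J with (i,j) ∈ A. -/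
open Set

private lemma half_mem_iff {a b : ℕ} (h : ((a:ℝ)+1/2) ∈ Icc (b:ℝ) ((b:ℝ)+1)) : a = b := by
  obtain ⟨h1, h2⟩ := h
  have h1' : (b:ℝ) < (a:ℝ)+1 := by linarith
  have h2' : (a:ℝ) < (b:ℝ)+1 := by linarith
  have hb : b < a+1 := by exact_mod_cast h1'
  have ha : a < b+1 := by exact_mod_cast h2'
  omega

private lemma clip_floor (N : ℕ) (hN : 1 ≤ N) (x : ℝ) (hx1 : (1:ℝ) ≤ x) (hx2 : x ≤ (N:ℝ)+1) :
    ∃ j : ℕ, 1 ≤ j ∧ j ≤ N ∧ (j:ℝ) ≤ x ∧ x ≤ (j:ℝ)+1 := by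
  by_cases h : ⌊x⌋₊ ≤ N
  · refine ⟨⌊x⌋₊, ?_, h, Nat.floor_le (by linarith), le_of_lt (Nat.lt_floor_add_one x)⟩
    exact Nat.one_le_floor_iff x |>.mpr hx1
  · push_neg at h
    have hx : ((N:ℝ)+1) ≤ x := by
      have h' : N+1 ≤ ⌊x⌋₊ := h
      have := (Nat.le_floor_iff (by linarith)).mp h'
      push_cast at this; linarith
    exact ⟨N, hN, le_refl N, by linarith, by linarith⟩

theorem rectangle_cover_iff_no_intersection (N : ℕ) (hN : 1 ≤ N)
    (A : Finset (ℕ × ℕ)) (I J : Finset ℕ)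
    (hA : A ⊆ Finset.Icc 1 N ×ˢ Finset.Icc 1 N)
    (hI : I ⊆ Finset.Icc 1 N) (hJ : J ⊆ Finset.Icc 1 N) :
    let C : Set (ℝ × ℝ) := Icc (1:ℝ) ((N:ℝ)+1) ×ˢ Icc (1:ℝ) ((N:ℝ)+1)
    let U : Set (ℝ × ℝ) :=
      (⋃ p ∈ (Finset.Icc 1 N ×ˢ Finset.Icc 1 N) \ A,
        Icc ((p.2:ℝ)) ((p.2:ℝ)+1) ×ˢ Icc ((p.1:ℝ)) ((p.1:ℝ)+1)) ∪
      (⋃ i ∈ Finset.Icc 1 N \ I,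
        Icc (1:ℝ) ((N:ℝ)+1) ×ˢ Icc ((i:ℝ)) ((i:ℝ)+1)) ∪
      (⋃ j ∈ Finset.Icc 1 N \ J,
        Icc ((j:ℝ)) ((j:ℝ)+1) ×ˢ Icc (1:ℝ) ((N:ℝ)+1))
    (U = C ↔ ¬ ∃ i ∈ I, ∃ j ∈ J, (i, j) ∈ A) := by
  intro C U
  constructor
  · intro hU
    rintro ⟨i, hi, j, hj, hij⟩
    have hiN := Finset.mem_Icc.mp (hI hi)
    have hjN := Finset.mem_Icc.mp (hJ hj)
    have ci1 : (1:ℝ) ≤ (i:ℝ) := by exact_mod_cast hiN.1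
    have ci2 : (i:ℝ) ≤ N := by exact_mod_cast hiN.2
    have cj1 : (1:ℝ) ≤ (j:ℝ) := by exact_mod_cast hjN.1
    have cj2 : (j:ℝ) ≤ N := by exact_mod_cast hjN.2
    have hx : ((j:ℝ) + 1/2, (i:ℝ) + 1/2) ∈ C :=
      ⟨⟨by linarith, by linarith⟩, by linarith, by linarith⟩
    rw [← hU] at hx
    simp only [U, mem_union, mem_iUnion, exists_prop] at hx
    rcases hx with (⟨p, hp, hmem⟩ | ⟨i', hi', hmem⟩) | ⟨j', hj', hmem⟩
    · obtain ⟨pi, pj⟩ := p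
      rw [Finset.mem_sdiff] at hp
      have e1 : j = pj := half_mem_iff hmem.1
      have e2 : i = pi := half_mem_iff hmem.2
      subst e1; subst e2
      exact hp.2 hij
    · rw [Finset.mem_sdiff] at hi'
      have : i = i' := half_mem_iff hmem.2
      exact hi'.2 (this ▸ hi)
    · rw [Finset.mem_sdiff] at hj'
      have : j = j' := half_mem_iff hmem.1
      exact hj'.2 (this ▸ hj)
  · intro hno
    apply Set.eq_of_subset_of_subset
    · rintro ⟨x, y⟩ hx
      simp only [U, mem_union, mem_iUnion, exists_prop] at hx
      rcases hx with (⟨p, hp, hmem⟩ | ⟨i', hi', hmem⟩) | ⟨j', hj', hmem⟩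
      · rw [Finset.mem_sdiff, Finset.mem_product, Finset.mem_Icc, Finset.mem_Icc] at hp
        obtain ⟨⟨⟨hi1, hi2⟩, hj1, hj2⟩, _⟩ := hp
        obtain ⟨⟨a1, a2⟩, b1, b2⟩ := hmem
        have c1 : (1:ℝ) ≤ (p.2:ℝ) := by exact_mod_cast hj1
        have c2 : (p.2:ℝ) ≤ N := by exact_mod_cast hj2
        have c3 : (1:ℝ) ≤ (p.1:ℝ) := by exact_mod_cast hi1
        have c4 : (p.1:ℝ) ≤ N := by exact_mod_cast hi2
        exact ⟨⟨by linarith, by linarith⟩, by linarith, by linarith⟩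
      · rw [Finset.mem_sdiff, Finset.mem_Icc] at hi'
        obtain ⟨⟨h1, h2⟩, _⟩ := hi'
        obtain ⟨⟨a1, a2⟩, b1, b2⟩ := hmem
        have c1 : (1:ℝ) ≤ (i':ℝ) := by exact_mod_cast h1
        have c2 : (i':ℝ) ≤ N := by exact_mod_cast h2
        exact ⟨⟨a1, a2⟩, by linarith, by linarith⟩
      · rw [Finset.mem_sdiff, Finset.mem_Icc] at hj'
        obtain ⟨⟨h1, h2⟩, _⟩ := hj'
        obtain ⟨⟨a1, a2⟩, b1, b2⟩ := hmem
        have c1 : (1:ℝ) ≤ (j':ℝ) := by exact_mod_cast h1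
        have c2 : (j':ℝ) ≤ N := by exact_mod_cast h2
        exact ⟨⟨by linarith, by linarith⟩, b1, b2⟩
    · rintro ⟨x, y⟩ ⟨⟨hx1, hx2⟩, hy1, hy2⟩
      obtain ⟨j, hj1, hj2, hjx, hjx'⟩ := clip_floor N hN x hx1 hx2
      obtain ⟨i, hi1, hi2, hiy, hiy'⟩ := clip_floor N hN y hy1 hy2
      simp only [U, mem_union, mem_iUnion, exists_prop]
      by_cases hAij : (i, j) ∈ A
      · by_cases hiI : i ∈ I
        · have hjJ : j ∉ J := fun hjJ => hno ⟨i, hiI, j, hjJ, hAij⟩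
          exact Or.inr ⟨j, by simp [Finset.mem_sdiff, Finset.mem_Icc, hj1, hj2, hjJ],
            ⟨hjx, hjx'⟩, ⟨hy1, hy2⟩⟩
        · exact Or.inl (Or.inr ⟨i, by simp [Finset.mem_sdiff, Finset.mem_Icc, hi1, hi2, hiI],
            ⟨hx1, hx2⟩, ⟨hiy, hiy'⟩⟩)
      · exact Or.inl (Or.inl ⟨(i, j), by
          simp [Finset.mem_sdiff, Finset.mem_product, Finset.mem_Icc, hi1, hi2, hj1, hj2, hAij],
          ⟨hjx, hjx'⟩, ⟨hiy, hiy'⟩⟩)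
end

section
/- Fix integers k ≥ 2, m ≥ 1, 1 ≤ i' ≤ k, a set A ⊆ {1,…,k}×{1,…,m}, and J ⊆ {1,…,m}. Consider the family of half-open boxes in ℝ²: s_{i,j} = [kj, kj+1)×[i, i+1) for (i,j) ∈ A; b_j = [kj, kj+k)×[1, k+1) for j ∈ J; and the two boxes H₁ = [k, k+km²)×[i', i'+km²) and H₂ = [k, k+km²)×[i'+1−km², i'+1). Then the depth of this family (the maximum over points x ∈ ℝ² of the number of members containing x) equals 4 if there exists j ∈ J with (i',j) ∈ A, and is at most 3 otherwise. -/
open Set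
open scoped Classical

private lemma nat_eq_of_real (a b : ℕ) (x : ℝ) (h1 : (a:ℝ) ≤ x) (h2 : x < (a:ℝ)+1)
    (h3 : (b:ℝ) ≤ x) (h4 : x < (b:ℝ)+1) : a = b := by
  have ha : (a:ℝ) < (b:ℝ)+1 := lt_of_le_of_lt h1 h4
  have hb : (b:ℝ) < (a:ℝ)+1 := lt_of_le_of_lt h3 h2
  have ha' : a < b+1 := by exact_mod_cast ha
  have hb' : b < a+1 := by exact_mod_cast hb
  omega

theorem depth_squares_gadget (k m i' : ℕ) (hk : 2 ≤ k) (hm : 1 ≤ m)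
    (hi'1 : 1 ≤ i') (hi'k : i' ≤ k)
    (A : Finset (ℕ × ℕ)) (hA : A ⊆ Finset.Icc 1 k ×ˢ Finset.Icc 1 m)
    (J : Finset ℕ) (hJ : J ⊆ Finset.Icc 1 m) :
    let s : ℕ × ℕ → Set (ℝ × ℝ) := fun p =>
      Ico ((k:ℝ)*p.2) ((k:ℝ)*p.2 + 1) ×ˢ Ico (p.1:ℝ) ((p.1:ℝ) + 1)
    let bsq : ℕ → Set (ℝ × ℝ) := fun j =>
      Ico ((k:ℝ)*j) ((k:ℝ)*j + (k:ℝ)) ×ˢ Ico (1:ℝ) ((k:ℝ) + 1)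
    let H₁ : Set (ℝ × ℝ) :=
      Ico (k:ℝ) ((k:ℝ) + (k:ℝ)*(m:ℝ)^2) ×ˢ Ico (i':ℝ) ((i':ℝ) + (k:ℝ)*(m:ℝ)^2)
    let H₂ : Set (ℝ × ℝ) :=
      Ico (k:ℝ) ((k:ℝ) + (k:ℝ)*(m:ℝ)^2) ×ˢ Ico ((i':ℝ) + 1 - (k:ℝ)*(m:ℝ)^2) ((i':ℝ) + 1)
    let depth : (ℝ × ℝ) → ℕ := fun x =>
      (A.filter (fun p => x ∈ s p)).card + (J.filter (fun j => x ∈ bsq j)).card +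
      (if x ∈ H₁ then 1 else 0) + (if x ∈ H₂ then 1 else 0)
    ((∃ j ∈ J, (i', j) ∈ A) → (∃ x, depth x = 4) ∧ (∀ x, depth x ≤ 4)) ∧
    ((¬ ∃ j ∈ J, (i', j) ∈ A) → ∀ x, depth x ≤ 3) := by
  intro s bsq H₁ H₂ depth
  have hk0 : 0 < k := by omega
  have hkR : (2:ℝ) ≤ (k:ℝ) := by exact_mod_cast hk
  have hmR : (1:ℝ) ≤ (m:ℝ) := by exact_mod_cast hm
  have hi'R : (1:ℝ) ≤ (i':ℝ) := by exact_mod_cast hi'1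
  have hi'kR : (i':ℝ) ≤ (k:ℝ) := by exact_mod_cast hi'k
  have hkm2 : (1:ℝ) ≤ (k:ℝ)*(m:ℝ)^2 := by nlinarith
  -- at most one s-box contains a point
  have hAcard : ∀ x : ℝ × ℝ, (A.filter (fun p => x ∈ s p)).card ≤ 1 := by
    intro x
    refine Finset.card_le_one.mpr ?_
    intro p hp q hq
    simp only [Finset.mem_filter, s, Set.mem_prod, Set.mem_Ico] at hp hq
    obtain ⟨-, ⟨h1, h2⟩, h3, h4⟩ := hp
    obtain ⟨-, ⟨g1, g2⟩, g3, g4⟩ := hq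
    have e2 : k * p.2 = k * q.2 := by
      refine nat_eq_of_real _ _ x.1 ?_ ?_ ?_ ?_ <;> push_cast <;> linarith
    have e1 : p.1 = q.1 := nat_eq_of_real _ _ x.2 h3 h4 g3 g4
    exact Prod.ext e1 (Nat.eq_of_mul_eq_mul_left hk0 e2)
  -- at most one b-box contains a point
  have hJcard : ∀ x : ℝ × ℝ, (J.filter (fun j => x ∈ bsq j)).card ≤ 1 := by
    intro x
    refine Finset.card_le_one.mpr ?_
    intro a ha b hb
    simp only [Finset.mem_filter, bsq, Set.mem_prod, Set.mem_Ico] at ha hb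
    obtain ⟨-, ⟨h1, h2⟩, -⟩ := ha
    obtain ⟨-, ⟨g1, g2⟩, -⟩ := hb
    have hab : k*a < k*(b+1) := by
      have : ((k*a:ℕ):ℝ) < ((k*(b+1):ℕ):ℝ) := by push_cast; linarith
      exact_mod_cast this
    have hba : k*b < k*(a+1) := by
      have : ((k*b:ℕ):ℝ) < ((k*(a+1):ℕ):ℝ) := by push_cast; linarith
      exact_mod_cast this
    have h1' : a < b+1 := Nat.lt_of_mul_lt_mul_left hab
    have h2' : b < a+1 := Nat.lt_of_mul_lt_mul_left hba
    omega
  have hub : ∀ x, depth x ≤ 4 := by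
    intro x
    have h1 := hAcard x
    have h2 := hJcard x
    simp only [depth]
    split_ifs <;> omega
  constructor
  · rintro ⟨j, hjJ, hijA⟩
    refine ⟨⟨((k:ℝ)*j, (i':ℝ)), ?_⟩, hub⟩
    have hj := Finset.mem_Icc.mp (hJ hjJ)
    have hjR1 : (1:ℝ) ≤ (j:ℝ) := by exact_mod_cast hj.1
    have hjRm : (j:ℝ) ≤ (m:ℝ) := by exact_mod_cast hj.2
    set x : ℝ × ℝ := ((k:ℝ)*j, (i':ℝ)) with hx
    have hxs : x ∈ s (i', j) := by
      simp only [s, Set.mem_prod, Set.mem_Ico, hx]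
      refine ⟨⟨le_refl _, by linarith⟩, le_refl _, by linarith⟩
    have hxb : x ∈ bsq j := by
      simp only [bsq, Set.mem_prod, Set.mem_Ico, hx]
      refine ⟨⟨le_refl _, by linarith⟩, by linarith, by linarith⟩
    have hjm2 : (j:ℝ) ≤ (m:ℝ)^2 := by nlinarith
    have hkj : (k:ℝ)*(j:ℝ) ≤ (k:ℝ)*(m:ℝ)^2 :=
      mul_le_mul_of_nonneg_left hjm2 (by linarith)
    have hxH1 : x ∈ H₁ := by
      simp only [H₁, Set.mem_prod, Set.mem_Ico, hx]
      refine ⟨⟨by nlinarith, by linarith⟩, le_refl _, by linarith⟩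
    have hxH2 : x ∈ H₂ := by
      simp only [H₂, Set.mem_prod, Set.mem_Ico, hx]
      refine ⟨⟨by nlinarith, by linarith⟩, by linarith, by linarith⟩
    have hA1 : (A.filter (fun p => x ∈ s p)).card = 1 :=
      le_antisymm (hAcard x)
        (Finset.card_pos.mpr ⟨(i', j), Finset.mem_filter.mpr ⟨hijA, hxs⟩⟩)
    have hJ1 : (J.filter (fun j' => x ∈ bsq j')).card = 1 :=
      le_antisymm (hJcard x)
        (Finset.card_pos.mpr ⟨j, Finset.mem_filter.mpr ⟨hjJ, hxb⟩⟩)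
    simp only [depth, hA1, hJ1, if_pos hxH1, if_pos hxH2]
  · intro hno x
    by_contra hcon
    push_neg at hcon
    have h1 := hAcard x
    have h2 := hJcard x
    simp only [depth] at hcon
    split_ifs at hcon with hH1 hH2
    · -- x ∈ H₁ and x ∈ H₂
      have hAne : ∃ p ∈ A, x ∈ s p := by
        have hpos : 0 < (A.filter (fun p => x ∈ s p)).card := by omega
        obtain ⟨p, hp⟩ := Finset.card_pos.mp hpos
        exact ⟨p, (Finset.mem_filter.mp hp).1, (Finset.mem_filter.mp hp).2⟩
      have hJne : ∃ j ∈ J, x ∈ bsq j := by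
        have hpos : 0 < (J.filter (fun j => x ∈ bsq j)).card := by omega
        obtain ⟨j, hj⟩ := Finset.card_pos.mp hpos
        exact ⟨j, (Finset.mem_filter.mp hj).1, (Finset.mem_filter.mp hj).2⟩
      obtain ⟨p, hpA, hps⟩ := hAne
      obtain ⟨j, hjJ, hjb⟩ := hJne
      simp only [s, Set.mem_prod, Set.mem_Ico] at hps
      simp only [bsq, Set.mem_prod, Set.mem_Ico] at hjb
      simp only [H₁, Set.mem_prod, Set.mem_Ico] at hH1
      simp only [H₂, Set.mem_prod, Set.mem_Ico] at hH2
      have e1 : p.1 = i' := nat_eq_of_real _ _ x.2 hps.2.1 hps.2.2 hH1.2.1 hH2.2.2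
      have c1 : k*p.2 < k*(j+1) := by
        have : ((k*p.2:ℕ):ℝ) < ((k*(j+1):ℕ):ℝ) := by push_cast; linarith [hps.1.1, hjb.1.2]
        exact_mod_cast this
      have c2 : k*j < k*p.2 + 1 := by
        have : ((k*j:ℕ):ℝ) < ((k*p.2+1:ℕ):ℝ) := by push_cast; linarith [hjb.1.1, hps.1.2]
        exact_mod_cast this
      have c1' : p.2 < j+1 := Nat.lt_of_mul_lt_mul_left c1
      have c2' : j ≤ p.2 := by
        have hle : k*j ≤ k*p.2 := by omega
        exact Nat.le_of_mul_le_mul_left hle hk0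
      have e2 : p.2 = j := by omega
      have hpe : p = (i', j) := Prod.ext e1 e2
      exact hno ⟨j, hjJ, hpe ▸ hpA⟩
    · omega
    · omega
    · omega
end
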